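/- For every ε ∈ (0,1) and dimension n there exists M > 1 such that: if w is a weight on ℝⁿ with the M-good doubling property, then for all s > 0 and all x, y ∈ ℝⁿ with |x − y| < s, (1+ε)⁻¹ ≤ (φ_s ∗ w)(y) / (χ̃_s ∗ w)(x) ≤ 1+ε, where φ(x) = π^{−n/2} e^{−|x|²} is the Gaussian and χ̃ is the L¹-normalized indicator of the unit ball. -/

import Mathlib

open MeasureTheory Metric Set Real Filter
noncomputable section

/-- `w` has the `M`-good doubling property: for all `x, R`, all `y ∈ B(x,R)` and all
`s, r ∈ [R/M, MR]`, `(1+1/M)⁻¹ ≤ [w(B(x,r))/w(B(y,s))]·(sⁿ/rⁿ) ≤ 1+1/M`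
(stated in multiplied-out form). -/
def GoodDoubling (n : ℕ) (M : ℝ) (w : EuclideanSpace ℝ (Fin n) → ℝ) : Prop :=
  ∀ (x : EuclideanSpace ℝ (Fin n)) (R : ℝ), 0 < R → ∀ y ∈ Metric.ball x R,
    ∀ r ∈ Set.Icc (R/M) (M*R), ∀ s ∈ Set.Icc (R/M) (M*R),
      (1+1/M)⁻¹ * (∫ z in Metric.ball y s, w z) * r^n ≤ (∫ z in Metric.ball x r, w z) * s^n ∧
      (∫ z in Metric.ball x r, w z) * s^n ≤ (1+1/M) * (∫ z in Metric.ball y s, w z) * r^n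

/-- The Gaussian kernel `φ(x) = π^{-n/2} e^{-|x|²}`. -/
def gauss (n : ℕ) (x : EuclideanSpace ℝ (Fin n)) : ℝ :=
  Real.pi ^ (-(n:ℝ)/2) * Real.exp (-‖x‖^2)

/-- `ψ = ∇φ`, the gradient of the Gaussian: `ψ(x) = -2 φ(x) x`. -/
def gaussGrad (n : ℕ) (x : EuclideanSpace ℝ (Fin n)) : EuclideanSpace ℝ (Fin n) :=
  (-2 * gauss n x) • x

/-- `(w ∗ φ_r)(x)` where `φ_r(x) = r⁻ⁿ φ(x/r)`; the heat extension of `w` at time `r²`. -/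
def heatConv (n : ℕ) (w : EuclideanSpace ℝ (Fin n) → ℝ) (r : ℝ)
    (x : EuclideanSpace ℝ (Fin n)) : ℝ :=
  ∫ z, (r^n)⁻¹ * gauss n (r⁻¹ • (x - z)) * w z

/-- `(w ∗ ψ_r)(x)` where `ψ_r(x) = r⁻ⁿ ψ(x/r)`. -/
def psiConv (n : ℕ) (w : EuclideanSpace ℝ (Fin n) → ℝ) (r : ℝ)
    (x : EuclideanSpace ℝ (Fin n)) : EuclideanSpace ℝ (Fin n) :=
  ∫ z, w z • ((r^n)⁻¹ • gaussGrad n (r⁻¹ • (x - z)))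

namespace HVNA
variable {n : ℕ} {M : ℝ} {w : EuclideanSpace ℝ (Fin n) → ℝ}

def dexp (M : ℝ) : ℝ := (Real.log (1+1/M) / (2 * Real.log M)) / 2


/-- The main 1-D integral family. -/
def J (n : ℕ) (d : ℝ) : ℝ := ∫ t in Ioi (0:ℝ), exp (-t) * t ^ ((n:ℝ)/2) * (max t t⁻¹) ^ d

def K (n : ℕ) (d : ℝ) : ℝ := ∫ t in Ioi (0:ℝ), exp (-t) * t ^ ((n:ℝ)/2) * (min t t⁻¹) ^ d

lemma Jf_meas (n : ℕ) (d : ℝ) :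
    Measurable fun t : ℝ => exp (-t) * t ^ ((n:ℝ)/2) * (max t t⁻¹) ^ d := by
  fun_prop

lemma Kf_meas (n : ℕ) (d : ℝ) :
    Measurable fun t : ℝ => exp (-t) * t ^ ((n:ℝ)/2) * (min t t⁻¹) ^ d := by
  fun_prop

lemma gbound_int (n : ℕ) : IntegrableOn
    (fun t : ℝ => exp (-t) * t ^ ((n:ℝ)/2 + 2⁻¹) + exp (-t) * t ^ ((n:ℝ)/2 - 2⁻¹))
    (Ioi 0) := by
  apply MeasureTheory.Integrable.add
  · have h := Real.GammaIntegral_convergent (s := (n:ℝ)/2 + 2⁻¹ + 1) (by positivity)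
    simpa [IntegrableOn] using h
  · have h := Real.GammaIntegral_convergent (s := (n:ℝ)/2 + 2⁻¹) (by positivity)
    have e : (n:ℝ)/2 + 2⁻¹ - 1 = (n:ℝ)/2 - 2⁻¹ := by ring
    rwa [e] at h

lemma Jf_nonneg {n : ℕ} {d t : ℝ} (ht : 0 < t) :
    0 ≤ exp (-t) * t ^ ((n:ℝ)/2) * (max t t⁻¹) ^ d := by
  have : (0:ℝ) < max t t⁻¹ := lt_max_iff.2 (Or.inl ht)
  positivity

lemma Kf_nonneg {n : ℕ} {d t : ℝ} (ht : 0 < t) :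
    0 ≤ exp (-t) * t ^ ((n:ℝ)/2) * (min t t⁻¹) ^ d := by
  have : (0:ℝ) < min t t⁻¹ := lt_min ht (by positivity)
  positivity

lemma Jf_le (n : ℕ) {d t : ℝ} (ht : 0 < t) (hd0 : 0 ≤ d) (hd : d ≤ 2⁻¹) :
    exp (-t) * t ^ ((n:ℝ)/2) * (max t t⁻¹) ^ d
      ≤ exp (-t) * t ^ ((n:ℝ)/2 + 2⁻¹) + exp (-t) * t ^ ((n:ℝ)/2 - 2⁻¹) := by
  have key : t ^ ((n:ℝ)/2) * (max t t⁻¹) ^ d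
      ≤ t ^ ((n:ℝ)/2 + 2⁻¹) + t ^ ((n:ℝ)/2 - 2⁻¹) := by
    rcases le_total 1 t with h1 | h1
    · have hmax : max t t⁻¹ = t := max_eq_left ((inv_le_one_of_one_le₀ h1).trans h1)
      rw [hmax, ← Real.rpow_add ht]
      have h2 : t ^ ((n:ℝ)/2 + d) ≤ t ^ ((n:ℝ)/2 + 2⁻¹) :=
        Real.rpow_le_rpow_of_exponent_le h1 (by linarith)
      have h3 : (0:ℝ) ≤ t ^ ((n:ℝ)/2 - 2⁻¹) := Real.rpow_nonneg ht.le _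
      linarith
    · have hmax : max t t⁻¹ = t⁻¹ := max_eq_right (le_trans h1 ((one_le_inv₀ ht).2 h1))
      rw [hmax, Real.inv_rpow ht.le, ← Real.rpow_neg ht.le, ← Real.rpow_add ht]
      have h2 : t ^ ((n:ℝ)/2 + -d) ≤ t ^ ((n:ℝ)/2 - 2⁻¹) :=
        Real.rpow_le_rpow_of_exponent_ge ht h1 (by linarith)
      have h3 : (0:ℝ) ≤ t ^ ((n:ℝ)/2 + 2⁻¹) := Real.rpow_nonneg ht.le _
      linarith
  calc exp (-t) * t ^ ((n:ℝ)/2) * (max t t⁻¹) ^ d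
      = exp (-t) * (t ^ ((n:ℝ)/2) * (max t t⁻¹) ^ d) := by ring
    _ ≤ exp (-t) * (t ^ ((n:ℝ)/2 + 2⁻¹) + t ^ ((n:ℝ)/2 - 2⁻¹)) :=
        mul_le_mul_of_nonneg_left key (exp_pos _).le
    _ = _ := by ring

lemma Kf_le_Jf (n : ℕ) {d t : ℝ} (ht : 0 < t) (hd0 : 0 ≤ d) :
    exp (-t) * t ^ ((n:ℝ)/2) * (min t t⁻¹) ^ d
      ≤ exp (-t) * t ^ ((n:ℝ)/2) * (max t t⁻¹) ^ d := by
  have h1 : (0:ℝ) ≤ min t t⁻¹ := le_min ht.le (by positivity)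
  have h2 : (min t t⁻¹) ^ d ≤ (max t t⁻¹) ^ d :=
    Real.rpow_le_rpow h1 (min_le_max) hd0
  have h3 : (0:ℝ) ≤ exp (-t) * t ^ ((n:ℝ)/2) := by positivity
  nlinarith

lemma J_int (n : ℕ) {d : ℝ} (hd0 : 0 ≤ d) (hd : d ≤ 2⁻¹) :
    IntegrableOn (fun t : ℝ => exp (-t) * t ^ ((n:ℝ)/2) * (max t t⁻¹) ^ d) (Ioi 0) := by
  refine MeasureTheory.Integrable.mono (gbound_int n) ((Jf_meas n d).aestronglyMeasurable.restrict) ?_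
  filter_upwards [ae_restrict_mem measurableSet_Ioi] with t ht
  rw [Real.norm_eq_abs, abs_of_nonneg (Jf_nonneg ht), Real.norm_eq_abs]
  exact le_trans (Jf_le n ht hd0 hd) (le_abs_self _)

lemma K_int (n : ℕ) {d : ℝ} (hd0 : 0 ≤ d) (hd : d ≤ 2⁻¹) :
    IntegrableOn (fun t : ℝ => exp (-t) * t ^ ((n:ℝ)/2) * (min t t⁻¹) ^ d) (Ioi 0) := by
  refine MeasureTheory.Integrable.mono (gbound_int n) ((Kf_meas n d).aestronglyMeasurable.restrict) ?_
  filter_upwards [ae_restrict_mem measurableSet_Ioi] with t ht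
  rw [Real.norm_eq_abs, abs_of_nonneg (Kf_nonneg ht), Real.norm_eq_abs]
  exact le_trans (le_trans (Kf_le_Jf n ht hd0) (Jf_le n ht hd0 hd)) (le_abs_self _)

lemma J_zero (n : ℕ) : J n 0 = Real.Gamma ((n:ℝ)/2 + 1) := by
  rw [Real.Gamma_eq_integral (by positivity : (0:ℝ) < (n:ℝ)/2 + 1), J]
  apply setIntegral_congr_fun measurableSet_Ioi
  intro t ht
  dsimp only
  rw [Real.rpow_zero, mul_one]
  norm_num

lemma J_nonneg (n : ℕ) (d : ℝ) : 0 ≤ J n d := by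
  apply setIntegral_nonneg measurableSet_Ioi
  intro t ht
  exact Jf_nonneg ht

lemma K_nonneg (n : ℕ) (d : ℝ) : 0 ≤ K n d := by
  apply setIntegral_nonneg measurableSet_Ioi
  intro t ht
  exact Kf_nonneg ht

lemma K_ge (n : ℕ) {d : ℝ} (hd0 : 0 ≤ d) (hd : d ≤ 2⁻¹) :
    2 * J n 0 - J n d ≤ K n d := by
  have hint0 : IntegrableOn (fun t : ℝ => exp (-t) * t ^ ((n:ℝ)/2) * (max t t⁻¹) ^ (0:ℝ)) (Ioi 0) :=
    J_int n le_rfl (by norm_num)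
  have hintd := J_int n hd0 hd
  have hsub : IntegrableOn (fun t : ℝ =>
      2 * (exp (-t) * t ^ ((n:ℝ)/2) * (max t t⁻¹) ^ (0:ℝ))
        - exp (-t) * t ^ ((n:ℝ)/2) * (max t t⁻¹) ^ d) (Ioi 0) :=
    (hint0.const_mul 2).sub hintd
  have hmono : ∀ t ∈ Ioi (0:ℝ),
      2 * (exp (-t) * t ^ ((n:ℝ)/2) * (max t t⁻¹) ^ (0:ℝ))
        - exp (-t) * t ^ ((n:ℝ)/2) * (max t t⁻¹) ^ d
      ≤ exp (-t) * t ^ ((n:ℝ)/2) * (min t t⁻¹) ^ d := by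
    intro t ht
    have ht : (0:ℝ) < t := ht
    have hminpos : (0:ℝ) < min t t⁻¹ := lt_min ht (by positivity)
    have hmaxpos : (0:ℝ) < max t t⁻¹ := lt_max_iff.2 (Or.inl ht)
    have hprod : (min t t⁻¹) ^ d * (max t t⁻¹) ^ d = 1 := by
      rw [← Real.mul_rpow hminpos.le hmaxpos.le, min_mul_max, mul_inv_cancel₀ ht.ne',
        Real.one_rpow]
    have hu : (0:ℝ) < (max t t⁻¹) ^ d := Real.rpow_pos_of_pos hmaxpos d
    have hv : (0:ℝ) < (min t t⁻¹) ^ d := Real.rpow_pos_of_pos hminpos d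
    have hsq := mul_nonneg (sq_nonneg ((max t t⁻¹) ^ d - 1)) hv.le
    have hkey : 2 - (max t t⁻¹) ^ d ≤ (min t t⁻¹) ^ d := by nlinarith
    have hc : (0:ℝ) ≤ exp (-t) * t ^ ((n:ℝ)/2) := by positivity
    rw [Real.rpow_zero]
    nlinarith
  have := setIntegral_mono_on hsub (K_int n hd0 hd) measurableSet_Ioi hmono
  rw [integral_sub (hint0.const_mul 2) hintd, integral_const_mul] at this
  simp only [J, K]
  linarith [this]

lemma J_tendsto (n : ℕ) :
    Tendsto (fun d => J n d) (nhdsWithin 0 (Icc (0:ℝ) 2⁻¹)) (nhds (J n 0)) := by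
  apply tendsto_integral_filter_of_dominated_convergence
    (fun t : ℝ => exp (-t) * t ^ ((n:ℝ)/2 + 2⁻¹) + exp (-t) * t ^ ((n:ℝ)/2 - 2⁻¹))
  · exact Eventually.of_forall fun d => ((Jf_meas n d).aestronglyMeasurable.restrict)
  · filter_upwards [self_mem_nhdsWithin] with d hd
    filter_upwards [ae_restrict_mem measurableSet_Ioi] with t ht
    rw [Real.norm_eq_abs, abs_of_nonneg (Jf_nonneg ht)]
    exact Jf_le n ht hd.1 hd.2
  · exact gbound_int n
  · filter_upwards [ae_restrict_mem measurableSet_Ioi] with t ht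
    have hmaxpos : (0:ℝ) < max t t⁻¹ := lt_max_iff.2 (Or.inl (ht : (0:ℝ) < t))
    have hcont : ContinuousAt (fun d : ℝ => (max t t⁻¹) ^ d) 0 := by
      have := Real.continuousAt_rpow (max t t⁻¹, (0:ℝ)) (Or.inl hmaxpos.ne')
      exact this.comp (continuousAt_const.prodMk continuousAt_id)
    have : Tendsto (fun d : ℝ => exp (-t) * t ^ ((n:ℝ)/2) * (max t t⁻¹) ^ d)
        (nhds 0) (nhds (exp (-t) * t ^ ((n:ℝ)/2) * (max t t⁻¹) ^ (0:ℝ))) :=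
      (continuousAt_const.mul hcont)
    exact this.mono_left nhdsWithin_le_nhds

variable {n : ℕ} {M : ℝ} {w : EuclideanSpace ℝ (Fin n) → ℝ}

lemma step (hM : 1 < M) (hGD : GoodDoubling n M w) (c : EuclideanSpace ℝ (Fin n))
    {r ρ : ℝ} (hρ : 0 < ρ) (hr : ρ ≤ r) (hrM : r ≤ M^2 * ρ) :
    (∫ z in Metric.ball c r, w z) * ρ^n ≤ (1+1/M) * ((∫ z in Metric.ball c ρ, w z) * r^n) ∧
    (∫ z in Metric.ball c ρ, w z) * r^n ≤ (1+1/M) * ((∫ z in Metric.ball c r, w z) * ρ^n) := by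
  have hM0 : (0:ℝ) < M := lt_trans one_pos hM
  have hrpos : 0 < r := lt_of_lt_of_le hρ hr
  have hR : 0 < r / M := by positivity
  have hb : (0:ℝ) < 1 + 1/M := by positivity
  have hMr : M * (r/M) = r := by field_simp
  have hrmem : r ∈ Set.Icc (r/M/M) (M*(r/M)) := by
    constructor
    · rw [div_div, div_le_iff₀ (by positivity)]
      nlinarith
    · rw [hMr]
  have hρmem : ρ ∈ Set.Icc (r/M/M) (M*(r/M)) := by
    constructor
    · rw [div_div, div_le_iff₀ (by positivity)]
      nlinarith
    · rw [hMr]; exact hr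
  obtain ⟨h1, h2⟩ := hGD c (r/M) hR c (Metric.mem_ball_self hR) r hrmem ρ hρmem
  constructor
  · calc (∫ z in Metric.ball c r, w z) * ρ^n
        ≤ (1+1/M) * (∫ z in Metric.ball c ρ, w z) * r^n := h2
      _ = (1+1/M) * ((∫ z in Metric.ball c ρ, w z) * r^n) := by ring
  · have := mul_le_mul_of_nonneg_left h1 hb.le
    rw [← mul_assoc, ← mul_assoc, mul_inv_cancel₀ hb.ne', one_mul] at this
    exact this

lemma chain_pow (hM : 1 < M) (hGD : GoodDoubling n M w) (hw : ∀ x, 0 ≤ w x)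
    (y : EuclideanSpace ℝ (Fin n)) {s : ℝ} (hs : 0 < s) :
    ∀ (k : ℕ) (ρ : ℝ), 0 < ρ → ρ ≤ (M^2)^k * s → s ≤ (M^2)^k * ρ →
    (∫ z in Metric.ball y ρ, w z) * s^n
        ≤ (1+1/M)^k * ((∫ z in Metric.ball y s, w z) * ρ^n) ∧
    (∫ z in Metric.ball y s, w z) * ρ^n
        ≤ (1+1/M)^k * ((∫ z in Metric.ball y ρ, w z) * s^n) := by
  have hM0 : (0:ℝ) < M := lt_trans one_pos hM
  have hb1 : (1:ℝ) ≤ 1 + 1/M := le_add_of_nonneg_right (by positivity)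
  have hM21 : (1:ℝ) ≤ M^2 := by nlinarith
  have hAnn : ∀ (c : EuclideanSpace ℝ (Fin n)) (t : ℝ),
      0 ≤ ∫ z in Metric.ball c t, w z := fun c t =>
    setIntegral_nonneg measurableSet_ball (fun z _ => hw z)
  intro k
  induction k with
  | zero =>
    intro ρ hρ h1 h2
    simp only [pow_zero, one_mul] at h1 h2 ⊢
    have : ρ = s := le_antisymm h1 h2
    subst this
    exact ⟨le_refl _, le_refl _⟩
  | succ k IH =>
    intro ρ hρ h1 h2
    have hMk : (0:ℝ) < (M^2)^k := by positivity
    by_cases hc1 : ρ ≤ (M^2)^k * s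
    · by_cases hc2 : s ≤ (M^2)^k * ρ
      · obtain ⟨g1, g2⟩ := IH ρ hρ hc1 hc2
        have hmono : ((1+1/M):ℝ)^k ≤ (1+1/M)^(k+1) :=
          pow_le_pow_right₀ hb1 (Nat.le_succ k)
        constructor
        · exact g1.trans (mul_le_mul_of_nonneg_right hmono
            (mul_nonneg (hAnn y s) (pow_nonneg hρ.le n)))
        · exact g2.trans (mul_le_mul_of_nonneg_right hmono
            (mul_nonneg (hAnn y ρ) (pow_nonneg hs.le n)))
      · -- ρ small : s > (M^2)^k * ρ
        push_neg at hc2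
        set ρ' : ℝ := s / (M^2)^k with hρ'def
        have hρ'pos : 0 < ρ' := by positivity
        have hρρ' : ρ < ρ' := by
          rw [hρ'def, lt_div_iff₀ hMk]
          nlinarith
        have hρ'M : ρ' ≤ M^2 * ρ := by
          rw [hρ'def, div_le_iff₀ hMk]
          calc s ≤ (M^2)^(k+1) * ρ := h2
            _ = M^2 * ρ * (M^2)^k := by ring
        obtain ⟨st1, st2⟩ := step hM hGD y hρ hρρ'.le hρ'M
        have hk1 : (1:ℝ) ≤ (M^2)^k := one_le_pow₀ hM21
        have hkk : (1:ℝ)*1 ≤ (M^2)^k * (M^2)^k := mul_le_mul hk1 hk1 one_pos.le hMk.le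
        have hIH1 : ρ' ≤ (M^2)^k * s := by
          rw [hρ'def, div_le_iff₀ hMk]
          nlinarith [hkk, hs]
        have hIH2 : s ≤ (M^2)^k * ρ' := by
          rw [hρ'def]
          field_simp
          exact le_rfl
        obtain ⟨g1, g2⟩ := IH ρ' hρ'pos hIH1 hIH2
        have hρ'n : (0:ℝ) < ρ'^n := pow_pos hρ'pos n
        constructor
        · -- A ρ * s^n ≤ b^{k+1} (A s * ρ^n)
          rw [pow_succ]
          refine le_of_mul_le_mul_right ?_ hρ'n
          have e1 := mul_le_mul_of_nonneg_right st2 (pow_nonneg hs.le n)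
          have e2 := mul_le_mul_of_nonneg_left g1
            (by positivity : (0:ℝ) ≤ (1+1/M) * ρ^n)
          linarith [e1, e2]
        · rw [pow_succ]
          refine le_of_mul_le_mul_right ?_ hρ'n
          have e1 := mul_le_mul_of_nonneg_right g2 (pow_nonneg hρ.le n)
          have e2 := mul_le_mul_of_nonneg_left st1
            (by positivity : (0:ℝ) ≤ (1+1/M)^k * s^n)
          linarith [e1, e2]
    · -- ρ big
      push_neg at hc1
      set ρ' : ℝ := (M^2)^k * s with hρ'def
      have hρ'pos : 0 < ρ' := by positivity
      have hρρ' : ρ' < ρ := hc1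
      have hρM : ρ ≤ M^2 * ρ' := by
        calc ρ ≤ (M^2)^(k+1) * s := h1
          _ = M^2 * ρ' := by rw [hρ'def]; ring
      obtain ⟨st1, st2⟩ := step hM hGD y hρ'pos hρρ'.le hρM
      have hIH1 : ρ' ≤ (M^2)^k * s := le_of_eq hρ'def
      have hk1 : (1:ℝ) ≤ (M^2)^k := one_le_pow₀ hM21
      have hkk : (1:ℝ)*1 ≤ (M^2)^k * (M^2)^k := mul_le_mul hk1 hk1 one_pos.le hMk.le
      have hIH2 : s ≤ (M^2)^k * ρ' := by
        rw [hρ'def]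
        nlinarith [hkk, hs]
      obtain ⟨g1, g2⟩ := IH ρ' hρ'pos hIH1 hIH2
      have hρ'n : (0:ℝ) < ρ'^n := pow_pos hρ'pos n
      constructor
      · rw [pow_succ]
        refine le_of_mul_le_mul_right ?_ hρ'n
        have e1 := mul_le_mul_of_nonneg_right st1 (pow_nonneg hs.le n)
        have e2 := mul_le_mul_of_nonneg_left g1
          (by positivity : (0:ℝ) ≤ (1+1/M) * ρ^n)
        linarith [e1, e2]
      · rw [pow_succ]
        refine le_of_mul_le_mul_right ?_ hρ'n
        have e1 := mul_le_mul_of_nonneg_right g2 (pow_nonneg hρ.le n)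
        have e2 := mul_le_mul_of_nonneg_left st2
          (by positivity : (0:ℝ) ≤ (1+1/M)^k * s^n)
        linarith [e1, e2]

lemma chain_real (hM : 1 < M) (hGD : GoodDoubling n M w) (hw : ∀ x, 0 ≤ w x)
    (y : EuclideanSpace ℝ (Fin n)) {s ρ : ℝ} (hs : 0 < s) (hρ : 0 < ρ) :
    (∫ z in Metric.ball y ρ, w z) * s^n
      ≤ ((1+1/M) * (max (ρ/s) (s/ρ)) ^ (Real.log (1+1/M)/(2*Real.log M)))
          * ((∫ z in Metric.ball y s, w z) * ρ^n) ∧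
    (∫ z in Metric.ball y s, w z) * ρ^n
      ≤ ((1+1/M) * (max (ρ/s) (s/ρ)) ^ (Real.log (1+1/M)/(2*Real.log M)))
          * ((∫ z in Metric.ball y ρ, w z) * s^n) := by
  have hM0 : (0:ℝ) < M := lt_trans one_pos hM
  have hb : (0:ℝ) < 1 + 1/M := by positivity
  have hb1 : (1:ℝ) ≤ 1 + 1/M := le_add_of_nonneg_right (by positivity)
  have hM21 : (1:ℝ) < M^2 := by nlinarith
  set u : ℝ := max (ρ/s) (s/ρ) with hudef
  have hu1 : (1:ℝ) ≤ u := by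
    rcases le_total s ρ with h | h
    · exact le_trans ((one_le_div hs).2 h) (le_max_left _ _)
    · exact le_trans ((one_le_div hρ).2 h) (le_max_right _ _)
  have hu0 : (0:ℝ) < u := lt_of_lt_of_le one_pos hu1
  set L : ℝ := Real.logb (M^2) u with hLdef
  have hL0 : 0 ≤ L := Real.logb_nonneg hM21 hu1
  set k : ℕ := ⌈L⌉₊ with hkdef
  have hkL : L ≤ (k:ℝ) := Nat.le_ceil L
  have hku : u ≤ (M^2)^k := by
    have h1 : (M^2:ℝ) ^ L ≤ (M^2:ℝ) ^ (k:ℝ) :=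
      Real.rpow_le_rpow_of_exponent_le hM21.le hkL
    rw [Real.rpow_logb (by positivity) hM21.ne' hu0] at h1
    rwa [Real.rpow_natCast] at h1
  have cond1 : ρ ≤ (M^2)^k * s := by
    have : ρ/s ≤ u := le_max_left _ _
    have h2 : ρ/s ≤ (M^2)^k := this.trans hku
    rw [div_le_iff₀ hs] at h2
    linarith
  have cond2 : s ≤ (M^2)^k * ρ := by
    have : s/ρ ≤ u := le_max_right _ _
    have h2 : s/ρ ≤ (M^2)^k := this.trans hku
    rw [div_le_iff₀ hρ] at h2
    linarith
  obtain ⟨c1, c2⟩ := chain_pow hM hGD hw y hs k ρ hρ cond1 cond2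
  have hfac : ((1+1/M):ℝ)^k ≤ (1+1/M) * u ^ (Real.log (1+1/M)/(2*Real.log M)) := by
    have e1 : ((1+1/M):ℝ)^k = ((1+1/M):ℝ)^((k:ℝ)) := (Real.rpow_natCast _ k).symm
    have e2 : ((k:ℝ)) ≤ L + 1 := (Nat.ceil_lt_add_one hL0).le
    have e3 : ((1+1/M):ℝ)^((k:ℝ)) ≤ ((1+1/M):ℝ)^(L+1) :=
      Real.rpow_le_rpow_of_exponent_le hb1 e2
    have e4 : ((1+1/M):ℝ)^(L+1) = ((1+1/M):ℝ)^L * (1+1/M) := by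
      rw [Real.rpow_add hb, Real.rpow_one]
    have e5 : ((1+1/M):ℝ)^L = u ^ (Real.log (1+1/M)/(2*Real.log M)) := by
      rw [Real.rpow_def_of_pos hb, Real.rpow_def_of_pos hu0]
      congr 1
      rw [hLdef, Real.logb, show (M^2:ℝ) = M^(2:ℕ) by norm_num, Real.log_pow]
      push_cast
      ring
    rw [e1]
    calc ((1+1/M):ℝ)^((k:ℝ)) ≤ ((1+1/M):ℝ)^(L+1) := e3
      _ = u ^ (Real.log (1+1/M)/(2*Real.log M)) * (1+1/M) := by rw [e4, e5]
      _ = (1+1/M) * u ^ (Real.log (1+1/M)/(2*Real.log M)) := by ring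
  have hAnn : ∀ (c : EuclideanSpace ℝ (Fin n)) (t : ℝ),
      0 ≤ ∫ z in Metric.ball c t, w z := fun c t =>
    setIntegral_nonneg measurableSet_ball (fun z _ => hw z)
  constructor
  · exact c1.trans (mul_le_mul_of_nonneg_right hfac
      (mul_nonneg (hAnn y s) (pow_nonneg hρ.le n)))
  · exact c2.trans (mul_le_mul_of_nonneg_right hfac
      (mul_nonneg (hAnn y ρ) (pow_nonneg hs.le n)))

lemma center_move (hM : 1 < M) (hGD : GoodDoubling n M w)
    {x y : EuclideanSpace ℝ (Fin n)} {s : ℝ} (hs : 0 < s) (hxy : dist x y < s) :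
    (∫ z in Metric.ball y s, w z) ≤ (1+1/M) * (∫ z in Metric.ball x s, w z) ∧
    (∫ z in Metric.ball x s, w z) ≤ (1+1/M) * (∫ z in Metric.ball y s, w z) := by
  have hM0 : (0:ℝ) < M := lt_trans one_pos hM
  have hb : (0:ℝ) < 1 + 1/M := by positivity
  have hmem : s ∈ Set.Icc (s/M) (M*s) := by
    constructor
    · exact div_le_self hs.le hM.le
    · exact le_mul_of_one_le_left hs.le hM.le
  obtain ⟨h1, h2⟩ := hGD x s hs y (by rwa [Metric.mem_ball, dist_comm]) s hmem s hmem
  have hsn : (0:ℝ) < s^n := pow_pos hs n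
  constructor
  · have h1' : (1+1/M)⁻¹ * (∫ z in Metric.ball y s, w z) ≤ ∫ z in Metric.ball x s, w z :=
      le_of_mul_le_mul_right h1 hsn
    calc (∫ z in Metric.ball y s, w z)
        = (1+1/M) * ((1+1/M)⁻¹ * (∫ z in Metric.ball y s, w z)) := by
          rw [← mul_assoc, mul_inv_cancel₀ hb.ne', one_mul]
      _ ≤ (1+1/M) * (∫ z in Metric.ball x s, w z) :=
          mul_le_mul_of_nonneg_left h1' hb.le
  · have h2' : (∫ z in Metric.ball x s, w z) ≤ (1+1/M) * (∫ z in Metric.ball y s, w z) :=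
      le_of_mul_le_mul_right h2 hsn
    exact h2'

variable {n : ℕ} {w : EuclideanSpace ℝ (Fin n) → ℝ}

lemma exp_repr (a : ℝ) :
    ∫⁻ t in Ioi a, ENNReal.ofReal (Real.exp (-t)) = ENNReal.ofReal (Real.exp (-a)) := by
  rw [← ofReal_integral_eq_lintegral_ofReal, integral_exp_neg_Ioi]
  · have h := exp_neg_integrableOn_Ioi a one_pos
    simpa [IntegrableOn] using h
  · exact ae_of_all _ fun t => (Real.exp_pos _).le

lemma Ioi_shift {f : ℝ → ENNReal} {a : ℝ} (ha : 0 ≤ a) :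
    ∫⁻ t in Ioi a, f t = ∫⁻ t in Ioi (0:ℝ), (Ioi a).indicator f t := by
  rw [← lintegral_indicator measurableSet_Ioi, ← lintegral_indicator measurableSet_Ioi,
    Set.indicator_indicator, Set.inter_eq_right.2 (Ioi_subset_Ioi ha)]

lemma heat_repr (hw : ∀ x, 0 ≤ w x) (hwm : AEMeasurable w)
    (y : EuclideanSpace ℝ (Fin n)) {s : ℝ} (hs : 0 < s) :
    ∫⁻ z, ENNReal.ofReal ((s^n)⁻¹ * gauss n (s⁻¹ • (y - z)) * w z)
      = ENNReal.ofReal ((s^n)⁻¹ * Real.pi ^ (-(n:ℝ)/2)) *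
        ∫⁻ t in Ioi (0:ℝ), ENNReal.ofReal (Real.exp (-t)) *
          (∫⁻ z in Metric.ball y (s * Real.sqrt t), ENNReal.ofReal (w z)) := by
  set a : EuclideanSpace ℝ (Fin n) → ℝ := fun z => ‖s⁻¹ • (y - z)‖^2 with hadef
  have ha0 : ∀ z, 0 ≤ a z := fun z => sq_nonneg _
  have hacont : Continuous a := by
    apply Continuous.pow
    fun_prop
  set C : ENNReal := ENNReal.ofReal ((s^n)⁻¹ * Real.pi ^ (-(n:ℝ)/2)) with hCdef
  have hCne : C ≠ ⊤ := ENNReal.ofReal_ne_top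
  set F : EuclideanSpace ℝ (Fin n) → ℝ → ENNReal := fun z t =>
    (Ioi (a z)).indicator (fun t => ENNReal.ofReal (Real.exp (-t))) t * ENNReal.ofReal (w z)
    with hFdef
  have step1 : ∀ z, ENNReal.ofReal ((s^n)⁻¹ * gauss n (s⁻¹ • (y - z)) * w z)
      = C * (ENNReal.ofReal (Real.exp (-(a z))) * ENNReal.ofReal (w z)) := by
    intro z
    rw [hCdef, ← ENNReal.ofReal_mul (by positivity), ← ENNReal.ofReal_mul (by positivity)]
    congr 1
    rw [gauss]
    ring
  calc ∫⁻ z, ENNReal.ofReal ((s^n)⁻¹ * gauss n (s⁻¹ • (y - z)) * w z)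
      = ∫⁻ z, C * (ENNReal.ofReal (Real.exp (-(a z))) * ENNReal.ofReal (w z)) := by
        exact lintegral_congr fun z => step1 z
    _ = C * ∫⁻ z, ENNReal.ofReal (Real.exp (-(a z))) * ENNReal.ofReal (w z) :=
        lintegral_const_mul' _ _ hCne
    _ = C * ∫⁻ z, ∫⁻ t in Ioi (0:ℝ), F z t := by
        congr 1
        apply lintegral_congr
        intro z
        rw [← exp_repr (a z), Ioi_shift (ha0 z),
          ← lintegral_mul_const' (ENNReal.ofReal (w z)) _ ENNReal.ofReal_ne_top]
    _ = C * ∫⁻ t in Ioi (0:ℝ), ∫⁻ z, F z t := by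
        congr 1
        apply lintegral_lintegral_swap
        have hS : MeasurableSet {q : EuclideanSpace ℝ (Fin n) × ℝ | a q.1 < q.2} :=
          measurableSet_lt (hacont.measurable.comp measurable_fst) measurable_snd
        have huncurry : Function.uncurry F = fun q : EuclideanSpace ℝ (Fin n) × ℝ =>
            {q : EuclideanSpace ℝ (Fin n) × ℝ | a q.1 < q.2}.indicator
              (fun q => ENNReal.ofReal (Real.exp (-q.2))) q * ENNReal.ofReal (w q.1) := by
          funext q
          simp only [Function.uncurry, hFdef, Set.indicator_apply, Set.mem_Ioi,
            Set.mem_setOf_eq]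
        rw [huncurry]
        apply AEMeasurable.mul
        · exact ((ENNReal.measurable_ofReal.comp
            (measurable_neg.comp measurable_snd).exp).indicator hS).aemeasurable
        · exact ENNReal.measurable_ofReal.comp_aemeasurable
            (hwm.comp_quasiMeasurePreserving Measure.quasiMeasurePreserving_fst)
    _ = C * ∫⁻ t in Ioi (0:ℝ), ENNReal.ofReal (Real.exp (-t)) *
          (∫⁻ z in Metric.ball y (s * Real.sqrt t), ENNReal.ofReal (w z)) := by
        congr 1
        apply setLIntegral_congr_fun measurableSet_Ioi
        intro t ht
        have hsq : ∀ z, (a z < t ↔ z ∈ Metric.ball y (s * Real.sqrt t)) := by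
          intro z
          rw [Metric.mem_ball, dist_eq_norm, ← norm_sub_rev, hadef]
          have hnorm : ‖s⁻¹ • (y - z)‖ = s⁻¹ * ‖y - z‖ := by
            rw [norm_smul, Real.norm_eq_abs, abs_of_pos (by positivity)]
          simp only [hnorm]
          rw [mul_pow]
          constructor
          · intro h
            have h1 : s⁻¹ * ‖y - z‖ < Real.sqrt t := by
              rw [show s⁻¹ * ‖y-z‖ = Real.sqrt ((s⁻¹*‖y-z‖)^2) by
                rw [Real.sqrt_sq (by positivity)]]
              exact Real.sqrt_lt_sqrt (by positivity) (by rw [mul_pow]; exact h)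
            calc ‖y - z‖ = s * (s⁻¹ * ‖y - z‖) := by field_simp
              _ < s * Real.sqrt t := by exact mul_lt_mul_of_pos_left h1 hs
          · intro h
            have h1 : s⁻¹ * ‖y - z‖ < Real.sqrt t := by
              have := mul_lt_mul_of_pos_left h (inv_pos.2 hs)
              calc s⁻¹ * ‖y - z‖ < s⁻¹ * (s * Real.sqrt t) := this
                _ = Real.sqrt t := by field_simp
            have h2 : (s⁻¹ * ‖y - z‖)^2 < Real.sqrt t ^ 2 :=
              pow_lt_pow_left₀ h1 (by positivity) (by norm_num)
            rw [Real.sq_sqrt (le_of_lt ht)] at h2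
            rw [mul_pow] at h2
            exact h2
        calc ∫⁻ z, F z t
            = ∫⁻ z, ENNReal.ofReal (Real.exp (-t)) *
              (Metric.ball y (s * Real.sqrt t)).indicator
                (fun z => ENNReal.ofReal (w z)) z := by
              apply lintegral_congr
              intro z
              rw [hFdef]
              simp only [Set.indicator_apply, Set.mem_Ioi]
              by_cases hzt : a z < t
              · rw [if_pos hzt, Set.indicator_of_mem ((hsq z).1 hzt)]
              · rw [if_neg hzt, Set.indicator_of_notMem
                  (fun hmem => hzt ((hsq z).2 hmem)), zero_mul, mul_zero]
          _ = ENNReal.ofReal (Real.exp (-t)) *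
              (∫⁻ z in Metric.ball y (s * Real.sqrt t), ENNReal.ofReal (w z)) := by
              rw [lintegral_const_mul' _ _ ENNReal.ofReal_ne_top,
                lintegral_indicator measurableSet_ball]

lemma exists_M (n : ℕ) {ε : ℝ} (hε : 0 < ε) :
    ∃ M : ℝ, 1 < M ∧ 0 ≤ dexp M ∧ dexp M ≤ 2⁻¹ ∧
      (1+1/M)^2 * J n (dexp M) ≤ (1+ε) * Real.Gamma ((n:ℝ)/2+1) ∧
      (1+ε)⁻¹ * Real.Gamma ((n:ℝ)/2+1) ≤ ((1+1/M)^2)⁻¹ * (2 * J n 0 - J n (dexp M)) := by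
  have hΓ : 0 < Real.Gamma ((n:ℝ)/2+1) := Real.Gamma_pos_of_pos (by positivity)
  have t0 : Tendsto (fun M:ℝ => 1/M) atTop (nhds 0) := by
    simpa [one_div] using (tendsto_inv_atTop_zero (𝕜 := ℝ))
  have t1 : Tendsto (fun M:ℝ => 1 + 1/M) atTop (nhds 1) := by
    simpa using tendsto_const_nhds.add t0
  have t2 : Tendsto (fun M:ℝ => Real.log (1+1/M)) atTop (nhds 0) := by
    have hc : ContinuousAt Real.log 1 := Real.continuousAt_log one_ne_zero
    simpa [Real.log_one, Function.comp_def] using hc.tendsto.comp t1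
  have t3 : Tendsto (fun M:ℝ => (2 * Real.log M)⁻¹) atTop (nhds 0) := by
    have h := Real.tendsto_log_atTop.const_mul_atTop (two_pos (α := ℝ))
    exact h.inv_tendsto_atTop
  have hdlim : Tendsto dexp atTop (nhds 0) := by
    have he : dexp = fun M => (Real.log (1+1/M) * (2*Real.log M)⁻¹) / 2 := by
      funext M; rw [dexp]; ring
    rw [he]
    simpa using (t2.mul t3).div_const 2
  have hmem : ∀ᶠ M : ℝ in atTop, dexp M ∈ Icc (0:ℝ) 2⁻¹ := by
    filter_upwards [eventually_ge_atTop (2:ℝ),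
      hdlim.eventually_lt_const (by norm_num : (0:ℝ) < 2⁻¹)] with M hM2 hlt
    refine ⟨?_, hlt.le⟩
    have hM0 : (0:ℝ) < M := by linarith
    have h1 : (0:ℝ) ≤ Real.log (1+1/M) := Real.log_nonneg
      (by rw [le_add_iff_nonneg_right]; positivity)
    have h2 : (0:ℝ) ≤ Real.log M := Real.log_nonneg (by linarith)
    rw [dexp]
    exact div_nonneg (div_nonneg h1 (by linarith)) two_pos.le
  have hJ : Tendsto (fun M => J n (dexp M)) atTop (nhds (J n 0)) :=
    (J_tendsto n).comp (tendsto_nhdsWithin_iff.2 ⟨hdlim, hmem⟩)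
  have hb2 : Tendsto (fun M:ℝ => (1+1/M)^2) atTop (nhds 1) := by
    simpa using t1.pow 2
  have hupT : Tendsto (fun M => (1+1/M)^2 * J n (dexp M)) atTop (nhds (J n 0)) := by
    simpa using hb2.mul hJ
  have hloT : Tendsto (fun M => ((1+1/M)^2)⁻¹ * (2 * J n 0 - J n (dexp M)))
      atTop (nhds (J n 0)) := by
    have h := (hb2.inv₀ one_ne_zero).mul
      ((tendsto_const_nhds (x := 2 * J n 0)).sub hJ)
    have e : (1:ℝ)⁻¹ * (2 * J n 0 - J n 0) = J n 0 := by ring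
    rw [e] at h
    exact h
  have e1 : ∀ᶠ M : ℝ in atTop,
      (1+1/M)^2 * J n (dexp M) < (1+ε) * Real.Gamma ((n:ℝ)/2+1) :=
    hupT.eventually_lt_const (by rw [J_zero]; nlinarith)
  have e2 : ∀ᶠ M : ℝ in atTop,
      (1+ε)⁻¹ * Real.Gamma ((n:ℝ)/2+1) < ((1+1/M)^2)⁻¹ * (2 * J n 0 - J n (dexp M)) := by
    apply hloT.eventually_const_lt
    rw [J_zero]
    have h1 : (1+ε)⁻¹ < 1 := by
      rw [inv_lt_one_iff₀]; right; linarith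
    nlinarith
  obtain ⟨M, hM⟩ := (((eventually_gt_atTop (1:ℝ)).and hmem).and (e1.and e2)).exists
  exact ⟨M, hM.1.1, hM.1.2.1, hM.1.2.2, hM.2.1.le, hM.2.2.le⟩


end HVNA

/-- For every `ε ∈ (0,1)` and dimension `n` there exists `M > 1` such that
for every weight `w` with the `M`-good doubling property, for all `s > 0` and `|x−y| < s`,
`(1+ε)⁻¹ ≤ (φ_s ∗ w)(y)/(χ̃_s ∗ w)(x) ≤ 1+ε`, where
`(χ̃_s ∗ w)(x) = (sⁿ|B(0,1)|)⁻¹ w(B(x,s))` (stated in multiplied-out form). -/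
theorem heat_vs_normalized_average (n : ℕ) (ε : ℝ) (hε : ε ∈ Set.Ioo (0:ℝ) 1) :
    ∃ M > (1:ℝ), ∀ w : EuclideanSpace ℝ (Fin n) → ℝ,
      (∀ x, 0 ≤ w x) → MeasureTheory.LocallyIntegrable w → GoodDoubling n M w →
      ∀ (s : ℝ) (x y : EuclideanSpace ℝ (Fin n)), 0 < s → dist x y < s →
        (1+ε)⁻¹ * ((s^n * (MeasureTheory.volume
            (Metric.ball (0 : EuclideanSpace ℝ (Fin n)) 1)).toReal)⁻¹ *
              ∫ z in Metric.ball x s, w z)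
          ≤ heatConv n w s y ∧
        heatConv n w s y
          ≤ (1+ε) * ((s^n * (MeasureTheory.volume
            (Metric.ball (0 : EuclideanSpace ℝ (Fin n)) 1)).toReal)⁻¹ *
              ∫ z in Metric.ball x s, w z) := by
  obtain ⟨hε0, hε1⟩ := hε
  rcases Nat.eq_zero_or_pos n with hn | hn
  · -- dimension 0 : everything is trivial
    subst hn
    refine ⟨2, one_lt_two, ?_⟩
    intro w hw hwloc hGD s x y hs hxy
    have huniv : ∀ (c : EuclideanSpace ℝ (Fin 0)) (r : ℝ), 0 < r →
        Metric.ball c r = Set.univ := by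
      intro c r hr
      apply Set.eq_univ_iff_forall.2
      intro z
      have hz : z = c := PiLp.ext fun i => i.elim0
      rw [Metric.mem_ball, hz, dist_self]
      exact hr
    have hvol : (volume : Measure (EuclideanSpace ℝ (Fin 0))) (Metric.ball 0 1) = 1 := by
      rw [huniv 0 1 one_pos]
      have h := (EuclideanSpace.volume_preserving_symm_measurableEquiv_toLp (Fin 0)).measure_preimage
        (MeasurableSet.univ (α := Fin 0 → ℝ)).nullMeasurableSet
      rw [Set.preimage_univ] at h
      rw [h, volume_pi, Measure.pi_univ]
      simp
    have hH : heatConv 0 w s y = ∫ z, w z := by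
      unfold heatConv gauss
      refine integral_congr_ae (Filter.Eventually.of_forall fun z => ?_)
      have hz : s⁻¹ • (y - z) = 0 := PiLp.ext fun i => i.elim0
      dsimp only
      rw [hz]
      norm_num
    rw [hH, huniv x s hs, hvol, MeasureTheory.setIntegral_univ]
    have hA : 0 ≤ ∫ z, w z := integral_nonneg hw
    have h1 : (1+ε)⁻¹ ≤ 1 := by
      rw [inv_le_one_iff₀]; right; linarith
    have h2 : (1:ℝ) ≤ 1+ε := by linarith
    simp only [pow_zero, ENNReal.toReal_one, mul_one, inv_one, one_mul]
    constructor
    · nlinarith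
    · nlinarith
  · -- main case n ≥ 1
    obtain ⟨M, hM, hd0, hd2, hup, hlo⟩ := HVNA.exists_M n hε0
    refine ⟨M, hM, ?_⟩
    intro w hw hwloc hGD s x y hs hxy
    haveI : Nonempty (Fin n) := ⟨⟨0, hn⟩⟩
    set d : ℝ := HVNA.dexp M with hd
    have hM0 : (0:ℝ) < M := lt_trans one_pos hM
    set b : ℝ := 1 + 1/M with hbdef
    have hb0 : 0 < b := by positivity
    set Γn : ℝ := Real.Gamma ((n:ℝ)/2+1) with hΓdef
    have hΓ : 0 < Γn := Real.Gamma_pos_of_pos (by positivity)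
    have hIball : ∀ (c : EuclideanSpace ℝ (Fin n)) (r : ℝ),
        IntegrableOn w (Metric.ball c r) := fun c r =>
      (hwloc.integrableOn_isCompact (isCompact_closedBall c r)).mono_set
        Metric.ball_subset_closedBall
    have hA : ∀ (c : EuclideanSpace ℝ (Fin n)) (r : ℝ),
        ENNReal.ofReal (∫ z in Metric.ball c r, w z)
          = ∫⁻ z in Metric.ball c r, ENNReal.ofReal (w z) := fun c r =>
      ofReal_integral_eq_lintegral_ofReal (hIball c r) (ae_of_all _ fun z => hw z)
    have hAnn : ∀ (c : EuclideanSpace ℝ (Fin n)) (r : ℝ),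
        0 ≤ ∫ z in Metric.ball c r, w z := fun c r =>
      setIntegral_nonneg measurableSet_ball fun z _ => hw z
    set Ax : ℝ := ∫ z in Metric.ball x s, w z with hAxdef
    have hAx0 : 0 ≤ Ax := hAnn x s
    have hwm : AEMeasurable w := hwloc.aestronglyMeasurable.aemeasurable
    have hmono_sqrt : Monotone Real.sqrt := fun a b h => Real.sqrt_le_sqrt h
    have hsn : (0:ℝ) < s^n := pow_pos hs n
    -- key pointwise bounds
    have key : ∀ t : ℝ, 0 < t →
        (∫ z in Metric.ball y (s * Real.sqrt t), w z)
          ≤ b^2 * Ax * (t ^ ((n:ℝ)/2) * (max t t⁻¹) ^ d) ∧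
        Ax * (t ^ ((n:ℝ)/2) * (min t t⁻¹) ^ d)
          ≤ b^2 * (∫ z in Metric.ball y (s * Real.sqrt t), w z) := by
      intro t ht
      have hst : 0 < Real.sqrt t := Real.sqrt_pos.2 ht
      set ρ : ℝ := s * Real.sqrt t with hρdef
      have hρ : 0 < ρ := by positivity
      have hm : (0:ℝ) < max t t⁻¹ := lt_max_iff.2 (Or.inl ht)
      have hmin : (0:ℝ) < min t t⁻¹ := lt_min ht (by positivity)
      have htn0 : (0:ℝ) ≤ t ^ ((n:ℝ)/2) := Real.rpow_nonneg ht.le _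
      have hρs : ρ / s = Real.sqrt t := by
        rw [hρdef, mul_comm, mul_div_assoc, div_self hs.ne', mul_one]
      have hsρ : s / ρ = (Real.sqrt t)⁻¹ := by
        rw [hρdef]
        field_simp
      have hu : max (ρ/s) (s/ρ) = Real.sqrt (max t t⁻¹) := by
        rw [hρs, hsρ, ← Real.sqrt_inv, ← hmono_sqrt.map_max]
      have huδ : (max (ρ/s) (s/ρ)) ^ (Real.log (1+1/M) / (2*Real.log M))
          = (max t t⁻¹) ^ d := by
        rw [hu, Real.sqrt_eq_rpow, ← Real.rpow_mul hm.le]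
        congr 1
        rw [hd, HVNA.dexp]
        ring
      have hρn : ρ^n = s^n * t ^ ((n:ℝ)/2) := by
        rw [hρdef, mul_pow]
        congr 1
        rw [← Real.rpow_natCast (Real.sqrt t) n, Real.sqrt_eq_rpow,
          ← Real.rpow_mul ht.le]
        congr 1
        push_cast
        ring
      obtain ⟨ch1, ch2⟩ := HVNA.chain_real hM hGD hw y hs hρ
      rw [huδ, hρn] at ch1 ch2
      obtain ⟨cm1, cm2⟩ := HVNA.center_move hM hGD hs hxy
      constructor
      · have h1 : (∫ z in Metric.ball y ρ, w z) * s^n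
            ≤ (b * (max t t⁻¹)^d * ((∫ z in Metric.ball y s, w z) * t ^ ((n:ℝ)/2)))
              * s^n := by
          calc (∫ z in Metric.ball y ρ, w z) * s^n
              ≤ b * (max t t⁻¹)^d
                * ((∫ z in Metric.ball y s, w z) * (s^n * t ^ ((n:ℝ)/2))) := ch1
            _ = _ := by ring
        have h2 := le_of_mul_le_mul_right h1 hsn
        calc (∫ z in Metric.ball y ρ, w z)
            ≤ b * (max t t⁻¹)^d * ((∫ z in Metric.ball y s, w z) * t ^ ((n:ℝ)/2)) := h2
          _ ≤ b * (max t t⁻¹)^d * ((b * Ax) * t ^ ((n:ℝ)/2)) := by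
              refine mul_le_mul_of_nonneg_left ?_ (by positivity)
              exact mul_le_mul_of_nonneg_right cm1 htn0
          _ = b^2 * Ax * (t ^ ((n:ℝ)/2) * (max t t⁻¹)^d) := by ring
      · have h1 : Ax * (s^n * t ^ ((n:ℝ)/2))
            ≤ b * ((∫ z in Metric.ball y s, w z) * (s^n * t ^ ((n:ℝ)/2))) := by
          have := mul_le_mul_of_nonneg_right cm2 (by positivity : (0:ℝ) ≤ s^n * t ^ ((n:ℝ)/2))
          calc Ax * (s^n * t ^ ((n:ℝ)/2))
              ≤ (b * (∫ z in Metric.ball y s, w z)) * (s^n * t ^ ((n:ℝ)/2)) := this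
            _ = _ := by ring
        have h2 : Ax * (s^n * t ^ ((n:ℝ)/2))
            ≤ b * ((b * (max t t⁻¹)^d) * ((∫ z in Metric.ball y ρ, w z) * s^n)) :=
          h1.trans (mul_le_mul_of_nonneg_left ch2 hb0.le)
        have h3 : (Ax * t ^ ((n:ℝ)/2)) * s^n
            ≤ (b^2 * (max t t⁻¹)^d * (∫ z in Metric.ball y ρ, w z)) * s^n := by
          calc (Ax * t ^ ((n:ℝ)/2)) * s^n = Ax * (s^n * t ^ ((n:ℝ)/2)) := by ring
            _ ≤ b * ((b * (max t t⁻¹)^d) * ((∫ z in Metric.ball y ρ, w z) * s^n)) := h2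
            _ = _ := by ring
        have h4 := le_of_mul_le_mul_right h3 hsn
        have hprod : (min t t⁻¹)^d * (max t t⁻¹)^d = 1 := by
          rw [← Real.mul_rpow hmin.le hm.le, min_mul_max, mul_inv_cancel₀ ht.ne',
            Real.one_rpow]
        have h5 := mul_le_mul_of_nonneg_right h4 (Real.rpow_nonneg hmin.le d)
        calc Ax * (t ^ ((n:ℝ)/2) * (min t t⁻¹)^d)
            = (Ax * t ^ ((n:ℝ)/2)) * (min t t⁻¹)^d := by ring
          _ ≤ (b^2 * (max t t⁻¹)^d * (∫ z in Metric.ball y ρ, w z)) * (min t t⁻¹)^d := h5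
          _ = b^2 * (∫ z in Metric.ball y ρ, w z) * ((min t t⁻¹)^d * (max t t⁻¹)^d) := by
              ring
          _ = b^2 * (∫ z in Metric.ball y ρ, w z) := by rw [hprod, mul_one]
    -- lintegral estimates
    set cC : ℝ := (s^n)⁻¹ * Real.pi ^ (-(n:ℝ)/2) with hcC
    have hcC0 : 0 < cC := by
      have : (0:ℝ) < Real.pi ^ (-(n:ℝ)/2) := Real.rpow_pos_of_pos Real.pi_pos _
      positivity
    set I : ENNReal := ∫⁻ t in Ioi (0:ℝ), ENNReal.ofReal (Real.exp (-t)) *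
        (∫⁻ z in Metric.ball y (s * Real.sqrt t), ENNReal.ofReal (w z)) with hI
    have repr := HVNA.heat_repr hw hwm y hs
    have hIcongr : I = ∫⁻ t in Ioi (0:ℝ),
        ENNReal.ofReal (Real.exp (-t) * ∫ z in Metric.ball y (s * Real.sqrt t), w z) := by
      rw [hI]
      apply setLIntegral_congr_fun measurableSet_Ioi
      intro t ht
      dsimp only
      rw [← hA, ← ENNReal.ofReal_mul (Real.exp_pos _).le]
    have hJint := HVNA.J_int n hd0 hd2
    have hKint := HVNA.K_int n hd0 hd2
    have hIUp : I ≤ ENNReal.ofReal (b^2 * Ax * HVNA.J n d) := by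
      have hJof : ENNReal.ofReal (HVNA.J n d) = ∫⁻ t in Ioi (0:ℝ),
          ENNReal.ofReal (Real.exp (-t) * t ^ ((n:ℝ)/2) * (max t t⁻¹) ^ d) := by
        rw [HVNA.J]
        exact ofReal_integral_eq_lintegral_ofReal hJint
          (by filter_upwards [ae_restrict_mem measurableSet_Ioi] with t ht
              exact HVNA.Jf_nonneg ht)
      have h1 : I ≤ ENNReal.ofReal (b^2 * Ax) * ENNReal.ofReal (HVNA.J n d) := by
        rw [hIcongr, hJof, ← lintegral_const_mul' _ _ ENNReal.ofReal_ne_top]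
        apply lintegral_mono_ae
        filter_upwards [ae_restrict_mem measurableSet_Ioi] with t ht
        rw [← ENNReal.ofReal_mul (by positivity : (0:ℝ) ≤ b^2*Ax)]
        apply ENNReal.ofReal_le_ofReal
        have hk := (key t ht).1
        calc Real.exp (-t) * ∫ z in Metric.ball y (s * Real.sqrt t), w z
            ≤ Real.exp (-t) * (b^2 * Ax * (t ^ ((n:ℝ)/2) * (max t t⁻¹) ^ d)) :=
              mul_le_mul_of_nonneg_left hk (Real.exp_pos _).le
          _ = b^2 * Ax * (Real.exp (-t) * t ^ ((n:ℝ)/2) * (max t t⁻¹) ^ d) := by ring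
      calc I ≤ ENNReal.ofReal (b^2 * Ax) * ENNReal.ofReal (HVNA.J n d) := h1
        _ = ENNReal.ofReal (b^2 * Ax * HVNA.J n d) :=
            (ENNReal.ofReal_mul (by positivity)).symm
    have hIfin : I ≠ ⊤ := ne_top_of_le_ne_top ENNReal.ofReal_ne_top hIUp
    have hILo : ENNReal.ofReal (Ax * HVNA.K n d) ≤ ENNReal.ofReal (b^2) * I := by
      have hKof : ENNReal.ofReal (HVNA.K n d) = ∫⁻ t in Ioi (0:ℝ),
          ENNReal.ofReal (Real.exp (-t) * t ^ ((n:ℝ)/2) * (min t t⁻¹) ^ d) := by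
        rw [HVNA.K]
        exact ofReal_integral_eq_lintegral_ofReal hKint
          (by filter_upwards [ae_restrict_mem measurableSet_Ioi] with t ht
              exact HVNA.Kf_nonneg ht)
      have h1 : ENNReal.ofReal (Ax * HVNA.K n d) = ∫⁻ t in Ioi (0:ℝ),
          ENNReal.ofReal (Ax * (Real.exp (-t) * t ^ ((n:ℝ)/2) * (min t t⁻¹) ^ d)) := by
        rw [ENNReal.ofReal_mul hAx0, hKof, ← lintegral_const_mul' _ _ ENNReal.ofReal_ne_top]
        apply lintegral_congr
        intro t
        rw [← ENNReal.ofReal_mul hAx0]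
      rw [h1, hIcongr, ← lintegral_const_mul' _ _ ENNReal.ofReal_ne_top]
      apply lintegral_mono_ae
      filter_upwards [ae_restrict_mem measurableSet_Ioi] with t ht
      rw [← ENNReal.ofReal_mul (by positivity : (0:ℝ) ≤ b^2)]
      apply ENNReal.ofReal_le_ofReal
      have hk := (key t ht).2
      calc Ax * (Real.exp (-t) * t ^ ((n:ℝ)/2) * (min t t⁻¹) ^ d)
          = Real.exp (-t) * (Ax * (t ^ ((n:ℝ)/2) * (min t t⁻¹) ^ d)) := by ring
        _ ≤ Real.exp (-t) * (b^2 * ∫ z in Metric.ball y (s * Real.sqrt t), w z) :=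
            mul_le_mul_of_nonneg_left hk (Real.exp_pos _).le
        _ = b^2 * (Real.exp (-t) * ∫ z in Metric.ball y (s * Real.sqrt t), w z) := by ring
    -- heatConv as toReal
    have hgausscont : Continuous fun z : EuclideanSpace ℝ (Fin n) =>
        (s^n)⁻¹ * gauss n (s⁻¹ • (y - z)) := by
      unfold gauss
      fun_prop
    have hHC : heatConv n w s y = cC * I.toReal := by
      have hmeas : AEStronglyMeasurable
          (fun z : EuclideanSpace ℝ (Fin n) =>
            (s^n)⁻¹ * gauss n (s⁻¹ • (y - z)) * w z) volume :=
        hgausscont.aestronglyMeasurable.mul hwloc.aestronglyMeasurable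
      have hnn : 0 ≤ᶠ[ae volume] fun z : EuclideanSpace ℝ (Fin n) =>
          (s^n)⁻¹ * gauss n (s⁻¹ • (y - z)) * w z := by
        apply ae_of_all
        intro z
        have h1 : 0 ≤ gauss n (s⁻¹ • (y - z)) := by
          rw [gauss]
          positivity
        have h2 := hw z
        have h3 : (0:ℝ) ≤ (s^n)⁻¹ := by positivity
        exact mul_nonneg (mul_nonneg h3 h1) h2
      rw [heatConv, integral_eq_lintegral_of_nonneg_ae hnn hmeas, repr, ← hI]
      rw [ENNReal.toReal_mul]
      congr 1
      rw [← hcC, ENNReal.toReal_ofReal hcC0.le]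
    have hIup' : I.toReal ≤ b^2 * Ax * HVNA.J n d := by
      have := ENNReal.toReal_mono ENNReal.ofReal_ne_top hIUp
      rwa [ENNReal.toReal_ofReal (mul_nonneg (mul_nonneg (by positivity) hAx0)
        (HVNA.J_nonneg n d))] at this
    have hIlo' : Ax * HVNA.K n d ≤ b^2 * I.toReal := by
      have h := ENNReal.toReal_mono (by
          exact ENNReal.mul_ne_top ENNReal.ofReal_ne_top hIfin) hILo
      rw [ENNReal.toReal_ofReal (mul_nonneg hAx0 (HVNA.K_nonneg n d)),
        ENNReal.toReal_mul, ENNReal.toReal_ofReal (by positivity)] at h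
      exact h
    -- volume of unit ball
    have hω : (volume (Metric.ball (0 : EuclideanSpace ℝ (Fin n)) 1)).toReal
        = Real.sqrt Real.pi ^ n / Γn := by
      rw [EuclideanSpace.volume_ball, Fintype.card_fin]
      simp only [ENNReal.ofReal_one, one_pow, one_mul]
      rw [ENNReal.toReal_ofReal (by positivity)]
    have hsq : (0:ℝ) < Real.sqrt Real.pi ^ n :=
      pow_pos (Real.sqrt_pos.2 Real.pi_pos) n
    have hπn : Real.pi ^ (-(n:ℝ)/2) = (Real.sqrt Real.pi ^ n)⁻¹ := by
      rw [Real.sqrt_eq_rpow, ← Real.rpow_natCast (Real.pi ^ ((1:ℝ)/2)) n,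
        ← Real.rpow_mul Real.pi_pos.le, ← Real.rpow_neg Real.pi_pos.le]
      congr 1
      push_cast
      ring
    have hinv : (s^n * (Real.sqrt Real.pi ^ n / Γn))⁻¹
        = (s^n)⁻¹ * (Real.sqrt Real.pi ^ n)⁻¹ * Γn := by
      field_simp
    have hq0 : (0:ℝ) < (s^n)⁻¹ * (Real.sqrt Real.pi ^ n)⁻¹ := by positivity
    have hcCq : cC = (s^n)⁻¹ * (Real.sqrt Real.pi ^ n)⁻¹ := by rw [hcC, hπn]
    rw [hω, hinv, hHC]
    constructor
    · -- lower bound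
      have hK2 : 2 * HVNA.J n 0 - HVNA.J n d ≤ HVNA.K n d := HVNA.K_ge n hd0 hd2
      have hKlow : (1+ε)⁻¹ * Γn ≤ (b^2)⁻¹ * HVNA.K n d := by
        have h1 : (1+ε)⁻¹ * Γn ≤ (b^2)⁻¹ * (2 * HVNA.J n 0 - HVNA.J n d) := by
          rw [hΓdef]
          exact hlo
        refine h1.trans (mul_le_mul_of_nonneg_left hK2 (by positivity))
      have hIlow : (1+ε)⁻¹ * Γn * Ax ≤ I.toReal := by
        have h2 : (1+ε)⁻¹ * Γn * Ax ≤ (b^2)⁻¹ * HVNA.K n d * Ax :=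
          mul_le_mul_of_nonneg_right hKlow hAx0
        have h3 : (b^2)⁻¹ * HVNA.K n d * Ax ≤ I.toReal := by
          have hb2 : (0:ℝ) < b^2 := by positivity
          rw [inv_mul_eq_div, div_mul_eq_mul_div, div_le_iff₀ hb2]
          calc HVNA.K n d * Ax = Ax * HVNA.K n d := by ring
            _ ≤ b^2 * I.toReal := hIlo'
            _ = I.toReal * b^2 := by ring
        exact h2.trans h3
      calc (1+ε)⁻¹ * ((s^n)⁻¹ * (Real.sqrt Real.pi ^ n)⁻¹ * Γn * Ax)
          = ((s^n)⁻¹ * (Real.sqrt Real.pi ^ n)⁻¹) * ((1+ε)⁻¹ * Γn * Ax) := by ring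
        _ ≤ ((s^n)⁻¹ * (Real.sqrt Real.pi ^ n)⁻¹) * I.toReal :=
            mul_le_mul_of_nonneg_left hIlow hq0.le
        _ = cC * I.toReal := by rw [hcCq]
    · -- upper bound
      have hJup : b^2 * HVNA.J n d ≤ (1+ε) * Γn := by rw [hΓdef]; exact hup
      calc cC * I.toReal
          ≤ cC * (b^2 * Ax * HVNA.J n d) := mul_le_mul_of_nonneg_left hIup' hcC0.le
        _ = ((s^n)⁻¹ * (Real.sqrt Real.pi ^ n)⁻¹) * ((b^2 * HVNA.J n d) * Ax) := by
            rw [hcCq]; ring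
        _ ≤ ((s^n)⁻¹ * (Real.sqrt Real.pi ^ n)⁻¹) * (((1+ε) * Γn) * Ax) := by
            refine mul_le_mul_of_nonneg_left ?_ hq0.le
            exact mul_le_mul_of_nonneg_right hJup hAx0
        _ = (1+ε) * ((s^n)⁻¹ * (Real.sqrt Real.pi ^ n)⁻¹ * Γn * Ax) := by ring
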